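/- arXiv:2509.26399 — 5 statements merged into one kernel-verified Lean document; each statement's English description precedes it below -/
import Mathlib

section
/- Let f : E → ℝ be differentiable, convex, and L-smooth (L > 0) on a real inner product space E, let x* be a global minimizer of f, and let 0 < η ≤ 1/L. Then for every x in E: ‖(x − η·∇f(x)) − x*‖² ≤ ‖x − x*‖² − (η/L)·‖∇f(x)‖². -/
open scoped RealInnerProductSpace BigOperators

section Aux

variable {E : Type*} [NormedAddCommGroup E] [InnerProductSpace ℝ E] [CompleteSpace E]

/-- Derivative of `f` along a line. -/
lemma gd_line_hasDerivAt (f : E → ℝ) (hdiff : Differentiable ℝ f) (a v : E) (t : ℝ) :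
    HasDerivAt (fun s : ℝ => f (a + s • v)) ⟪gradient f (a + t • v), v⟫ t := by
  have hc : HasDerivAt (fun s : ℝ => a + s • v) v t := by
    simpa using ((hasDerivAt_id t).smul_const v).const_add a
  have hf : HasFDerivAt f (InnerProductSpace.toDual ℝ E (gradient f (a + t • v))) (a + t • v) :=
    (hasGradientAt_iff_hasFDerivAt.mp (hdiff (a + t • v)).hasGradientAt)
  have := hf.comp_hasDerivAt t hc
  rw [InnerProductSpace.toDual_apply_apply] at this
  exact this

/-- Descent lemma for an `L`-smooth function. -/
lemma gd_descent (f : E → ℝ) (L : ℝ) (hL : 0 < L) (hdiff : Differentiable ℝ f)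
    (hsmooth : ∀ x y : E, ‖gradient f x - gradient f y‖ ≤ L * ‖x - y‖) (a b : E) :
    f b ≤ f a + ⟪gradient f a, b - a⟫ + L / 2 * ‖b - a‖ ^ 2 := by
  set v := b - a with hv
  set ψ : ℝ → ℝ := fun t => f (a + t • v) - t * ⟪gradient f a, v⟫ - L * t ^ 2 * ‖v‖ ^ 2 / 2
    with hψ
  have hψd : ∀ t : ℝ, HasDerivAt ψ
      (⟪gradient f (a + t • v), v⟫ - ⟪gradient f a, v⟫ - L * t * ‖v‖ ^ 2) t := by
    intro t
    have h1 := gd_line_hasDerivAt f hdiff a v t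
    have h2 : HasDerivAt (fun s : ℝ => s * ⟪gradient f a, v⟫) ⟪gradient f a, v⟫ t := by
      simpa using (hasDerivAt_id t).mul_const ⟪gradient f a, v⟫
    have h3 : HasDerivAt (fun s : ℝ => L * s ^ 2 * ‖v‖ ^ 2 / 2) (L * t * ‖v‖ ^ 2) t := by
      have : HasDerivAt (fun s : ℝ => s ^ 2) (2 * t) t := by
        simpa using hasDerivAt_pow 2 t
      have := ((this.const_mul L).mul_const (‖v‖ ^ 2)).div_const 2
      rw [show L * t * ‖v‖ ^ 2 = L * (2 * t) * ‖v‖ ^ 2 / 2 by ring]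
      exact this
    exact (h1.sub h2).sub h3
  have hanti : AntitoneOn ψ (Set.Icc (0 : ℝ) 1) := by
    apply antitoneOn_of_deriv_nonpos (convex_Icc 0 1)
    · exact fun t _ => (hψd t).continuousAt.continuousWithinAt
    · intro t ht
      exact ((hψd t).differentiableAt).differentiableWithinAt
    · intro t ht
      rw [interior_Icc] at ht
      rw [(hψd t).deriv]
      have ht0 : (0 : ℝ) ≤ t := ht.1.le
      have hCS : ⟪gradient f (a + t • v) - gradient f a, v⟫ ≤
          ‖gradient f (a + t • v) - gradient f a‖ * ‖v‖ := real_inner_le_norm _ _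
      have hLip : ‖gradient f (a + t • v) - gradient f a‖ ≤ L * (t * ‖v‖) := by
        have := hsmooth (a + t • v) a
        simpa [norm_smul, abs_of_nonneg ht0] using this
      have : ⟪gradient f (a + t • v) - gradient f a, v⟫ ≤ L * t * ‖v‖ ^ 2 := by
        calc ⟪gradient f (a + t • v) - gradient f a, v⟫ ≤
            ‖gradient f (a + t • v) - gradient f a‖ * ‖v‖ := hCS
          _ ≤ L * (t * ‖v‖) * ‖v‖ := by
              apply mul_le_mul_of_nonneg_right hLip (norm_nonneg v)
          _ = L * t * ‖v‖ ^ 2 := by ring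
      rw [inner_sub_left] at this
      linarith
  have h01 := hanti (Set.left_mem_Icc.mpr zero_le_one) (Set.right_mem_Icc.mpr zero_le_one)
    zero_le_one
  have h0 : ψ 0 = f a := by simp [hψ]
  have h1 : ψ 1 = f b - ⟪gradient f a, v⟫ - L * ‖v‖ ^ 2 / 2 := by
    simp [hψ, hv]
  rw [h0, h1] at h01
  linarith

/-- Gradient inequality for a convex differentiable function. -/
lemma gd_convex_ineq (f : E → ℝ) (hdiff : Differentiable ℝ f)
    (hconv : ConvexOn ℝ Set.univ f) (a b : E) :
    f a + ⟪gradient f a, b - a⟫ ≤ f b := by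
  rcases eq_or_ne a b with rfl | hab
  · simp
  set φ : ℝ → ℝ := fun t => f (a + t • (b - a)) with hφ
  have hφconv : ConvexOn ℝ Set.univ φ := by
    have := hconv.comp_affineMap (AffineMap.lineMap a b : ℝ →ᵃ[ℝ] E)
    have heq : φ = f ∘ (AffineMap.lineMap a b : ℝ →ᵃ[ℝ] E) := by
      funext t
      simp [hφ, AffineMap.lineMap_apply, add_comm]
    rw [heq]
    simpa using this
  have hder : HasDerivAt φ ⟪gradient f a, b - a⟫ 0 := by
    have := gd_line_hasDerivAt f hdiff a (b - a) 0
    simpa using this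
  have hslope : deriv φ 0 ≤ slope φ 0 1 :=
    hφconv.deriv_le_slope (Set.mem_univ 0) (Set.mem_univ 1) zero_lt_one
      hder.differentiableAt
  rw [hder.deriv] at hslope
  have hs : slope φ 0 1 = f b - f a := by
    simp [slope_def_field, hφ]
  rw [hs] at hslope
  linarith

/-- Key inequality: `f b ≥ f a + ⟪∇f a, b - a⟫ + (1/(2L)) ‖∇f b - ∇f a‖²`. -/
lemma gd_key (f : E → ℝ) (L : ℝ) (hL : 0 < L) (hdiff : Differentiable ℝ f)
    (hconv : ConvexOn ℝ Set.univ f)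
    (hsmooth : ∀ x y : E, ‖gradient f x - gradient f y‖ ≤ L * ‖x - y‖) (a b : E) :
    f a + ⟪gradient f a, b - a⟫ + 1 / (2 * L) * ‖gradient f b - gradient f a‖ ^ 2 ≤ f b := by
  set g := gradient f with hg
  set z : E := b - (1 / L) • (g b - g a) with hz
  -- convexity: f a + ⟪g a, z - a⟫ ≤ f z
  have hc := gd_convex_ineq f hdiff hconv a z
  -- descent: f z ≤ f b + ⟪g b, z - b⟫ + L/2 ‖z - b‖²
  have hd := gd_descent f L hL hdiff hsmooth b z
  have hzb : z - b = -((1 / L) • (g b - g a)) := by simp [hz]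
  have hzbnorm : ‖z - b‖ ^ 2 = (1 / L) ^ 2 * ‖g b - g a‖ ^ 2 := by
    rw [hzb, norm_neg, norm_smul]
    simp [abs_of_pos (one_div_pos.mpr hL), mul_pow]
  have hinner1 : ⟪g b, z - b⟫ = -(1 / L) * ⟪g b, g b - g a⟫ := by
    rw [hzb, inner_neg_right, real_inner_smul_right]
    ring
  have hinner2 : ⟪g a, z - a⟫ = ⟪g a, b - a⟫ - (1 / L) * ⟪g a, g b - g a⟫ := by
    have : z - a = (b - a) - (1 / L) • (g b - g a) := by
      rw [hz]; abel
    rw [this, inner_sub_right, real_inner_smul_right]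
  have hnormsq : ⟪g b, g b - g a⟫ - ⟪g a, g b - g a⟫ = ‖g b - g a‖ ^ 2 := by
    rw [← inner_sub_left, real_inner_self_eq_norm_sq]
  have hL' : (0 : ℝ) < 1 / L := one_div_pos.mpr hL
  -- combine
  rw [hinner2] at hc
  rw [hinner1, hzbnorm] at hd
  have hfield : L / 2 * ((1 / L) ^ 2 * ‖g b - g a‖ ^ 2) = 1 / (2 * L) * ‖g b - g a‖ ^ 2 := by
    field_simp
  rw [hfield] at hd
  have e1 : (1 / L) * ⟪g b, g b - g a⟫ - (1 / L) * ⟪g a, g b - g a⟫ =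
      (1 / L) * ‖g b - g a‖ ^ 2 := by rw [← hnormsq]; ring
  have e2 : (1 / L) * ‖g b - g a‖ ^ 2 = 2 * (1 / (2 * L) * ‖g b - g a‖ ^ 2) := by
    field_simp
  linarith [hc, hd, e1, e2]

end Aux

/-- One-step gradient descent contraction toward a global minimizer for a differentiable,
convex, `L`-smooth function, with stepsize `0 < η ≤ 1/L`. -/
theorem gradient_descent_one_step_contraction
    {E : Type*} [NormedAddCommGroup E] [InnerProductSpace ℝ E] [CompleteSpace E]
    (f : E → ℝ) (L : ℝ) (hL : 0 < L)
    (hdiff : Differentiable ℝ f)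
    (hconv : ConvexOn ℝ Set.univ f)
    (hsmooth : ∀ x y : E, ‖gradient f x - gradient f y‖ ≤ L * ‖x - y‖)
    (xstar : E) (hmin : ∀ x : E, f xstar ≤ f x)
    (η : ℝ) (hη0 : 0 < η) (hη : η ≤ 1 / L) (x : E) :
    ‖(x - η • gradient f x) - xstar‖ ^ 2 ≤
      ‖x - xstar‖ ^ 2 - (η / L) * ‖gradient f x‖ ^ 2 := by
  set g := gradient f x with hgdef
  -- gradient at the minimizer is zero
  have hgstar : gradient f xstar = 0 := by
    have hlm : IsLocalMin f xstar := by
      apply IsMinOn.isLocalMin (s := Set.univ)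
      · intro y _; exact hmin y
      · exact Filter.univ_mem
    have hfd : fderiv ℝ f xstar = 0 := hlm.fderiv_eq_zero
    simp [gradient, hfd]
  -- cocoercivity at the minimizer: ⟪g, x - xstar⟫ ≥ (1/L) ‖g‖²
  have h1 := gd_key f L hL hdiff hconv hsmooth xstar x
  have h2 := gd_key f L hL hdiff hconv hsmooth x xstar
  rw [hgstar] at h1 h2
  simp only [inner_zero_left, sub_zero, zero_sub, norm_neg, add_zero] at h1 h2
  have hco : (1 / L) * ‖g‖ ^ 2 ≤ ⟪g, x - xstar⟫ := by
    have hxs : ⟪g, xstar - x⟫ = -⟪g, x - xstar⟫ := by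
      rw [← inner_neg_right]; congr 1; abel
    rw [hxs] at h2
    have h2L : 1 / (2 * L) * ‖g‖ ^ 2 + 1 / (2 * L) * ‖g‖ ^ 2 = (1 / L) * ‖g‖ ^ 2 := by
      field_simp; ring
    linarith
  -- expand the square
  have hexp : ‖(x - η • g) - xstar‖ ^ 2 =
      ‖x - xstar‖ ^ 2 - 2 * η * ⟪g, x - xstar⟫ + η ^ 2 * ‖g‖ ^ 2 := by
    have : (x - η • g) - xstar = (x - xstar) - η • g := by abel
    rw [this, norm_sub_sq_real, norm_smul, real_inner_smul_right,
      real_inner_comm]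
    simp [abs_of_pos hη0, mul_pow]
    ring
  rw [hexp]
  have hg2 : (0 : ℝ) ≤ ‖g‖ ^ 2 := sq_nonneg _
  have hη2 : η ^ 2 ≤ η * (1 / L) := by
    have := mul_le_mul_of_nonneg_left hη hη0.le
    simpa [sq] using this
  rw [div_eq_mul_one_div η L]
  nlinarith [mul_le_mul_of_nonneg_left hco (by linarith : (0:ℝ) ≤ 2 * η),
    mul_le_mul_of_nonneg_right hη2 hg2]
end

section
/- Let L_u : E → ℝ (u = 1, …, U) be differentiable, convex, and L-smooth with minimizer W* of L_u, and let 0 < η ≤ 1/L. Let W_u^(0) = W and W_u^(e+1) = W_u^(e) − η·∇L_u(W_u^(e)) for e = 0, …, E−1. Then ‖W_u^(E) − W*‖² ≤ ‖W − W*‖² − (η/L)·∑_{e=0}^{E−1} ‖∇L_u(W_u^(e))‖². -/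
open scoped RealInnerProductSpace BigOperators

section AuxGD
open Set

variable {E : Type*} [NormedAddCommGroup E] [InnerProductSpace ℝ E] [CompleteSpace E]

lemma hasDerivAt_line (f : E → ℝ) (hdiff : Differentiable ℝ f) (x v : E) (t : ℝ) :
    HasDerivAt (fun s : ℝ => f (x + s • v)) ⟪gradient f (x + t • v), v⟫ t := by
  have h1 : HasDerivAt (fun s : ℝ => x + s • v) v t := by
    simpa using ((hasDerivAt_id t).smul_const v).const_add x
  have h2 : HasFDerivAt f (InnerProductSpace.toDual ℝ E (gradient f (x + t • v))) (x + t • v) :=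
    (hasGradientAt_iff_hasFDerivAt).mp (hdiff (x + t • v)).hasGradientAt
  exact h2.comp_hasDerivAt t h1

lemma first_order (f : E → ℝ) (hdiff : Differentiable ℝ f) (hconv : ConvexOn ℝ Set.univ f)
    (x y : E) : f x + ⟪gradient f x, y - x⟫ ≤ f y := by
  set v := y - x with hv
  have hφc : ConvexOn ℝ Set.univ (fun s : ℝ => f (x + s • v)) := by
    have h := hconv.comp_affineMap (AffineMap.lineMap x y : ℝ →ᵃ[ℝ] E)
    have he : (fun s : ℝ => f (x + s • v)) = f ∘ (AffineMap.lineMap x y : ℝ →ᵃ[ℝ] E) := by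
      funext s; simp [AffineMap.lineMap_apply, hv, add_comm]
    rw [he]
    simpa using h
  have hd : HasDerivWithinAt (fun s : ℝ => f (x + s • v)) ⟪gradient f x, v⟫ Set.univ 0 := by
    have h := hasDerivAt_line f hdiff x v 0
    rw [show x + (0:ℝ) • v = x by simp] at h
    exact h.hasDerivWithinAt
  have := hφc.le_slope_of_hasDerivWithinAt (Set.mem_univ 0) (Set.mem_univ 1) one_pos hd
  simp only [slope_def_field] at this
  have h0 : x + (0:ℝ) • v = x := by simp
  have h1 : x + (1:ℝ) • v = y := by simp [hv]
  rw [h0, h1] at this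
  simp only [div_one, sub_zero] at this
  linarith

lemma descent (f : E → ℝ) (L : ℝ) (hdiff : Differentiable ℝ f)
    (hsmooth : ∀ x y : E, ‖gradient f x - gradient f y‖ ≤ L * ‖x - y‖) (x y : E) :
    f y ≤ f x + ⟪gradient f x, y - x⟫ + L / 2 * ‖y - x‖ ^ 2 := by
  set v := y - x with hv
  set ψ : ℝ → ℝ := fun t => f (x + t • v) - t * ⟪gradient f x, v⟫ - L * t ^ 2 / 2 * ‖v‖ ^ 2 with hψ
  have hψd : ∀ t : ℝ, HasDerivAt ψ
      (⟪gradient f (x + t • v), v⟫ - ⟪gradient f x, v⟫ - L * t * ‖v‖ ^ 2) t := by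
    intro t
    have h1 := hasDerivAt_line f hdiff x v t
    have h2 : HasDerivAt (fun s : ℝ => s * ⟪gradient f x, v⟫) ⟪gradient f x, v⟫ t := by
      simpa using (hasDerivAt_id t).mul_const ⟪gradient f x, v⟫
    have h3 : HasDerivAt (fun s : ℝ => L * s ^ 2 / 2 * ‖v‖ ^ 2) (L * t * ‖v‖ ^ 2) t := by
      have : HasDerivAt (fun s : ℝ => s ^ 2) (2 * t) t := by
        simpa using hasDerivAt_pow 2 t
      have := ((this.const_mul L).div_const 2).mul_const (‖v‖ ^ 2)
      exact this.congr_deriv (by ring)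
    exact (h1.sub h2).sub h3
  have hanti : AntitoneOn ψ (Set.Icc 0 1) := by
    apply antitoneOn_of_deriv_nonpos (convex_Icc 0 1)
    · exact (continuous_iff_continuousAt.mpr fun t => (hψd t).continuousAt).continuousOn
    · intro t ht
      exact (hψd t).differentiableAt.differentiableWithinAt
    · intro t ht
      rw [interior_Icc] at ht
      rw [(hψd t).deriv]
      have hb : ⟪gradient f (x + t • v) - gradient f x, v⟫ ≤ L * t * ‖v‖ ^ 2 := by
        calc ⟪gradient f (x + t • v) - gradient f x, v⟫
            ≤ ‖gradient f (x + t • v) - gradient f x‖ * ‖v‖ := real_inner_le_norm _ _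
          _ ≤ (L * ‖(x + t • v) - x‖) * ‖v‖ := by
              gcongr; exact hsmooth _ _
          _ = L * t * ‖v‖ ^ 2 := by
              simp [norm_smul, abs_of_pos ht.1]; ring
      have := inner_sub_left (𝕜 := ℝ) (gradient f (x + t • v)) (gradient f x) v
      rw [this] at hb
      linarith
  have := hanti (Set.mem_Icc.mpr ⟨le_refl 0, zero_le_one⟩) (Set.mem_Icc.mpr ⟨zero_le_one, le_refl 1⟩) zero_le_one
  simp only [hψ] at this
  have h0 : x + (0:ℝ) • v = x := by simp
  have h1 : x + (1:ℝ) • v = y := by simp [hv]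
  rw [h0, h1] at this
  simp at this
  have hgv : ⟪gradient f x, v⟫ = (fderiv ℝ f x) v := by simp
  linarith

lemma grad_min_zero (f : E → ℝ) (hdiff : Differentiable ℝ f) (Wstar : E)
    (hmin : ∀ x : E, f Wstar ≤ f x) : gradient f Wstar = 0 := by
  have hloc : IsLocalMin f Wstar := by
    apply Filter.Eventually.of_forall
    intro z; exact hmin z
  have hf : fderiv ℝ f Wstar = 0 := hloc.fderiv_eq_zero
  have := (hdiff Wstar).hasGradientAt
  rw [hasGradientAt_iff_hasFDerivAt] at this
  have h2 := this.fderiv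
  rw [hf] at h2
  have : InnerProductSpace.toDual ℝ E (gradient f Wstar) = InnerProductSpace.toDual ℝ E 0 := by
    rw [← h2]; simp
  exact (InnerProductSpace.toDual ℝ E).injective this

lemma cocoercive_at_min (f : E → ℝ) (L : ℝ) (hL : 0 < L) (hdiff : Differentiable ℝ f)
    (hconv : ConvexOn ℝ Set.univ f)
    (hsmooth : ∀ x y : E, ‖gradient f x - gradient f y‖ ≤ L * ‖x - y‖)
    (Wstar : E) (hmin : ∀ x : E, f Wstar ≤ f x) (x : E) :
    (1 / L) * ‖gradient f x‖ ^ 2 ≤ ⟪gradient f x, x - Wstar⟫ := by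
  set g := gradient f x with hg
  have hgW : gradient f Wstar = 0 := grad_min_zero f hdiff Wstar hmin
  -- h z := f z - ⟪g, z⟫ is minimized at x, by first-order convexity
  have hminh : ∀ z : E, f x - ⟪g, x⟫ ≤ f z - ⟪g, z⟫ := by
    intro z
    have := first_order f hdiff hconv x z
    rw [inner_sub_right] at this
    linarith
  -- descent applied to f at Wstar toward Wstar + (1/L) • g
  have hdes := descent f L hdiff hsmooth Wstar (Wstar + (1/L) • g)
  rw [hgW] at hdes
  simp only [inner_zero_left, add_sub_cancel_left, norm_smul] at hdes
  have hds : f (Wstar + (1/L) • g) ≤ f Wstar + 1/(2*L) * ‖g‖ ^ 2 := by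
    have h1 : L / 2 * (‖(1:ℝ)/L‖ * ‖g‖) ^ 2 = 1/(2*L) * ‖g‖^2 := by
      rw [Real.norm_eq_abs, abs_of_pos (by positivity)]
      field_simp
    rw [h1] at hdes
    linarith
  have hm := hminh (Wstar + (1/L) • g)
  rw [inner_add_right, real_inner_smul_right, real_inner_self_eq_norm_sq] at hm
  -- also f Wstar ≤ f (x - (1/L) • g) ≤ f x - 1/(2L) ‖g‖²
  have hdes2 := descent f L hdiff hsmooth x (x - (1/L) • g)
  have h2 : x - (1/L) • g - x = -((1/L) • g) := by abel
  rw [h2] at hdes2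
  rw [inner_neg_right, real_inner_smul_right, real_inner_self_eq_norm_sq, norm_neg, norm_smul,
    Real.norm_eq_abs, abs_of_pos (show (0:ℝ) < 1/L by positivity)] at hdes2
  have hdes2' : f (x - (1/L) • g) ≤ f x - 1/(2*L) * ‖g‖ ^ 2 := by
    have : L / 2 * (1/L * ‖g‖) ^ 2 = 1/(2*L) * ‖g‖^2 := by field_simp
    rw [this] at hdes2
    have : 1/L * ‖g‖^2 - 1/(2*L) * ‖g‖^2 = 1/(2*L) * ‖g‖^2 := by field_simp; ring
    linarith
  have hWle := hmin (x - (1/L) • g)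
  have harith : 1/(2*L) * ‖g‖^2 + 1/(2*L) * ‖g‖^2 = 1/L * ‖g‖^2 := by
    field_simp; ring
  rw [inner_sub_right]
  linarith

lemma one_step (f : E → ℝ) (L : ℝ) (hL : 0 < L) (hdiff : Differentiable ℝ f)
    (hconv : ConvexOn ℝ Set.univ f)
    (hsmooth : ∀ x y : E, ‖gradient f x - gradient f y‖ ≤ L * ‖x - y‖)
    (Wstar : E) (hmin : ∀ x : E, f Wstar ≤ f x)
    (η : ℝ) (hη0 : 0 < η) (hη : η ≤ 1 / L) (x : E) :
    ‖x - η • gradient f x - Wstar‖ ^ 2 ≤ ‖x - Wstar‖ ^ 2 - (η / L) * ‖gradient f x‖ ^ 2 := by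
  set g := gradient f x with hg
  have hco := cocoercive_at_min f L hL hdiff hconv hsmooth Wstar hmin x
  have hrw : x - η • g - Wstar = (x - Wstar) - η • g := by abel
  rw [hrw, norm_sub_sq_real, real_inner_smul_right, norm_smul, Real.norm_eq_abs,
    abs_of_pos hη0, mul_pow]
  have hsymm : ⟪x - Wstar, g⟫ = ⟪g, x - Wstar⟫ := real_inner_comm _ _
  rw [hsymm]
  have h1 : η ^ 2 * ‖g‖ ^ 2 ≤ η * (1/L) * ‖g‖ ^ 2 := by
    have : η ^ 2 ≤ η * (1/L) := by nlinarith
    nlinarith [sq_nonneg ‖g‖]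
  have h2 : η * (1/L) * ‖g‖ ^ 2 ≤ η * ⟪g, x - Wstar⟫ := by
    have := mul_le_mul_of_nonneg_left hco (le_of_lt hη0)
    linarith [this]
  have : η / L = η * (1/L) := by ring
  rw [this]
  nlinarith [h1, h2]

end AuxGD

/-- Per-client multi-step gradient descent contraction: iterating the one-step contraction,
with `Lf` differentiable, convex, `L`-smooth, minimizer `Wstar`, and stepsize `0 < η ≤ 1/L`. -/
theorem local_gd_multi_step_contraction
    {E : Type*} [NormedAddCommGroup E] [InnerProductSpace ℝ E] [CompleteSpace E]
    (Lf : E → ℝ) (L : ℝ) (hL : 0 < L)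
    (hdiff : Differentiable ℝ Lf)
    (hconv : ConvexOn ℝ Set.univ Lf)
    (hsmooth : ∀ x y : E, ‖gradient Lf x - gradient Lf y‖ ≤ L * ‖x - y‖)
    (Wstar : E) (hmin : ∀ x : E, Lf Wstar ≤ Lf x)
    (η : ℝ) (hη0 : 0 < η) (hη : η ≤ 1 / L)
    (N : ℕ)
    (W : E) (Wseq : ℕ → E)
    (hW0 : Wseq 0 = W)
    (hstep : ∀ e, Wseq (e + 1) = Wseq e - η • gradient Lf (Wseq e)) :
    ‖Wseq N - Wstar‖ ^ 2 ≤
      ‖W - Wstar‖ ^ 2 - (η / L) * ∑ e ∈ Finset.range N, ‖gradient Lf (Wseq e)‖ ^ 2 := by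

  induction N with
  | zero => simp [hW0]
  | succ n ih =>
    rw [Finset.sum_range_succ, hstep n]
    have h1 := one_step Lf L hL hdiff hconv hsmooth Wstar hmin η hη0 hη (Wseq n)
    have hηL : 0 ≤ η / L := by positivity
    nlinarith [h1, ih]
end

section
/- Suppose each local objective L_u (u = 1, …, U) is differentiable, convex, and L-smooth; let L = (1/U)·∑_{u=1}^U L_u, let W* be a global minimizer of L, and let σ*² ≥ 0 satisfy (1/U)·∑_{u=1}^U ‖∇L_u(W*)‖² ≤ σ*². Let each client run E steps of local gradient descent with stepsize η > 0 from the common starting point W. Then (1/U)·∑_{u=1}^U ∑_{e=0}^{E−1} ‖∇L_u(W_u^(e))‖² ≤ (3L²/U)·∑_{u=1}^U ∑_{e=0}^{E−1} ‖W_u^(e) − W‖² + 6·E·L·(L(W) − L(W*)) + 3·E·σ*². -/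
open scoped RealInnerProductSpace BigOperators


section Aux

variable {E : Type*} [NormedAddCommGroup E] [InnerProductSpace ℝ E] [CompleteSpace E]

lemma aux_hasDerivAt_line (f : E → ℝ) (g : E → E) (hg : ∀ z, HasGradientAt f (g z) z)
    (x v : E) (t : ℝ) :
    HasDerivAt (fun s : ℝ => f (x + s • v)) ⟪g (x + t • v), v⟫ t := by
  have hline : HasDerivAt (fun s : ℝ => x + s • v) v t := by
    simpa using ((hasDerivAt_id t).smul_const v).const_add x
  have hf : HasFDerivAt f (InnerProductSpace.toDual ℝ E (g (x + t • v))) (x + t • v) :=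
    hasGradientAt_iff_hasFDerivAt.mp (hg _)
  have := hf.comp_hasDerivAt t hline
  simp only [InnerProductSpace.toDual_apply_apply] at this
  exact this

lemma aux_descent (f : E → ℝ) (g : E → E) (hg : ∀ z, HasGradientAt f (g z) z)
    (L : ℝ) (hL : 0 ≤ L) (hlip : ∀ a b : E, ‖g a - g b‖ ≤ L * ‖a - b‖) (x y : E) :
    f y ≤ f x + ⟪g x, y - x⟫ + L / 2 * ‖y - x‖ ^ 2 := by
  set v := y - x with hv
  set φ : ℝ → ℝ := fun t => f (x + t • v) - t * ⟪g x, v⟫ - L / 2 * t ^ 2 * ‖v‖ ^ 2 with hφ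
  have hφd : ∀ t : ℝ,
      HasDerivAt φ (⟪g (x + t • v), v⟫ - ⟪g x, v⟫ - L * t * ‖v‖ ^ 2) t := by
    intro t
    have h1 := aux_hasDerivAt_line f g hg x v t
    have h2 : HasDerivAt (fun s : ℝ => s * ⟪g x, v⟫) ⟪g x, v⟫ t := hasDerivAt_mul_const _
    have h3 : HasDerivAt (fun s : ℝ => L / 2 * s ^ 2 * ‖v‖ ^ 2) (L * t * ‖v‖ ^ 2) t := by
      have := ((hasDerivAt_pow 2 t).const_mul (L / 2)).mul_const (‖v‖ ^ 2)
      refine this.congr_deriv ?_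
      ring
    exact (h1.sub h2).sub h3
  have hanti : AntitoneOn φ (Set.Icc (0:ℝ) 1) := by
    apply antitoneOn_of_deriv_nonpos (convex_Icc 0 1)
    · exact fun t _ => (hφd t).differentiableAt.continuousAt.continuousWithinAt
    · exact fun t _ => (hφd t).differentiableAt.differentiableWithinAt
    · intro t ht
      rw [interior_Icc] at ht
      rw [(hφd t).deriv]
      have hbound : ⟪g (x + t • v) - g x, v⟫ ≤ L * t * ‖v‖ ^ 2 := by
        calc ⟪g (x + t • v) - g x, v⟫ ≤ ‖g (x + t • v) - g x‖ * ‖v‖ :=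
              real_inner_le_norm _ _
          _ ≤ (L * ‖(x + t • v) - x‖) * ‖v‖ := by
              gcongr
              exact hlip _ _
          _ = L * t * ‖v‖ ^ 2 := by
              simp only [add_sub_cancel_left, norm_smul, Real.norm_eq_abs,
                abs_of_pos ht.1]
              ring
      rw [inner_sub_left] at hbound
      linarith
  have h01 : φ 1 ≤ φ 0 :=
    hanti (Set.left_mem_Icc.mpr zero_le_one) (Set.right_mem_Icc.mpr zero_le_one) zero_le_one
  have hy : x + (1:ℝ) • v = y := by rw [one_smul, hv]; abel
  simp only [hφ, hy, zero_smul, add_zero, one_pow, mul_one, zero_mul, zero_pow,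
    mul_zero, sub_zero, one_mul] at h01
  linarith

lemma aux_convex_foc (f : E → ℝ) (g : E → E) (hg : ∀ z, HasGradientAt f (g z) z)
    (hconv : ConvexOn ℝ Set.univ f) (x y : E) :
    f x + ⟪g x, y - x⟫ ≤ f y := by
  set v := y - x with hv
  have hgc : ConvexOn ℝ Set.univ (fun t : ℝ => f (x + t • v)) := by
    refine ⟨convex_univ, fun a _ b _ α β hα hβ hab => ?_⟩
    have h := hconv.2 (Set.mem_univ (x + a • v)) (Set.mem_univ (x + b • v)) hα hβ hab
    have he : x + (α * a + β * b) • v = α • (x + a • v) + β • (x + b • v) := by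
      have : x = (α + β) • x := by rw [hab, one_smul]
      rw [smul_add, smul_add]
      nth_rewrite 1 [this]
      module
    simpa [he, smul_eq_mul] using h
  have hd : HasDerivAt (fun t : ℝ => f (x + t • v)) ⟪g (x + (0:ℝ) • v), v⟫ 0 :=
    aux_hasDerivAt_line f g hg x v 0
  have hslope := hgc.le_slope_of_hasDerivAt (Set.mem_univ (0:ℝ)) (Set.mem_univ (1:ℝ))
    zero_lt_one hd
  rw [slope_def_field] at hslope
  simp only [zero_smul, add_zero, one_smul] at hslope hd
  have hy : x + v = y := by rw [hv]; abel
  rw [hy] at hslope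
  simp only [sub_zero, div_one] at hslope
  linarith [hslope]

lemma aux_cocoercive (f : E → ℝ) (g : E → E) (hg : ∀ z, HasGradientAt f (g z) z)
    (hconv : ConvexOn ℝ Set.univ f)
    (L : ℝ) (hL : 0 < L) (hlip : ∀ a b : E, ‖g a - g b‖ ≤ L * ‖a - b‖) (x y : E) :
    ‖g x - g y‖ ^ 2 ≤ 2 * L * (f x - f y - ⟪g y, x - y⟫) := by
  set a := g y with ha
  set h : E → ℝ := fun z => f z - ⟪a, z⟫ with hh
  set gh : E → E := fun z => g z - a with hgh
  have hgh' : ∀ z, HasGradientAt h (gh z) z := by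
    intro z
    rw [hasGradientAt_iff_hasFDerivAt]
    have h1 : HasFDerivAt f (InnerProductSpace.toDual ℝ E (g z)) z :=
      hasGradientAt_iff_hasFDerivAt.mp (hg z)
    have h2 : HasFDerivAt (fun w : E => ⟪a, w⟫) (InnerProductSpace.toDual ℝ E a) z :=
      (InnerProductSpace.toDual ℝ E a).hasFDerivAt
    have h3 : (InnerProductSpace.toDual ℝ E) (gh z)
        = InnerProductSpace.toDual ℝ E (g z) - InnerProductSpace.toDual ℝ E a := by
      simp [hgh, map_sub]
    rw [h3]
    exact h1.sub h2
  have hhc : ConvexOn ℝ Set.univ h := by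
    refine ⟨convex_univ, fun p _ q _ α β hα hβ hab => ?_⟩
    have h := hconv.2 (Set.mem_univ p) (Set.mem_univ q) hα hβ hab
    simp only [smul_eq_mul] at h
    simp only [hh, smul_eq_mul, inner_add_right, real_inner_smul_right]
    linarith
  have hhlip : ∀ p q : E, ‖gh p - gh q‖ ≤ L * ‖p - q‖ := by
    intro p q
    have : gh p - gh q = g p - g q := by simp [hgh]
    rw [this]; exact hlip p q
  -- h y ≤ h z for all z since gh y = 0
  have hymin : ∀ z : E, h y ≤ h z := by
    intro z
    have := aux_convex_foc h gh hgh' hhc y z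
    simp only [hgh, ha, sub_self, inner_zero_left, add_zero] at this
    exact this
  set w := g x - a with hw
  have hdes := aux_descent h gh hgh' L hL.le hhlip x (x - (1 / L) • w)
  have hpt : (x - (1 / L) • w) - x = -((1 / L) • w) := by abel
  rw [hpt] at hdes
  have hIP : ⟪gh x, -((1 / L) • w)⟫ = -(1 / L) * ‖w‖ ^ 2 := by
    have : gh x = w := rfl
    rw [this, inner_neg_right, real_inner_smul_right, real_inner_self_eq_norm_sq]
    ring
  have hNrm : ‖-((1 / L) • w)‖ ^ 2 = (1 / L) ^ 2 * ‖w‖ ^ 2 := by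
    rw [norm_neg, norm_smul, Real.norm_eq_abs, mul_pow, sq_abs]
  rw [hIP, hNrm] at hdes
  have hchain : h y ≤ h x - 1 / (2 * L) * ‖w‖ ^ 2 := by
    have h1 := hymin (x - (1 / L) • w)
    have hLne : L ≠ 0 := hL.ne'
    have : L / 2 * ((1 / L) ^ 2 * ‖w‖ ^ 2) = 1 / (2 * L) * ‖w‖ ^ 2 := by
      field_simp
    rw [this] at hdes
    have : -(1 / L) * ‖w‖ ^ 2 + 1 / (2 * L) * ‖w‖ ^ 2 = -(1 / (2 * L)) * ‖w‖ ^ 2 := by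
      field_simp; ring
    linarith
  have hxy : h x - h y = f x - f y - ⟪a, x - y⟫ := by
    simp only [hh, inner_sub_right]; ring
  have : 1 / (2 * L) * ‖w‖ ^ 2 ≤ f x - f y - ⟪a, x - y⟫ := by
    rw [← hxy]; linarith
  have h2L : (0:ℝ) < 2 * L := by linarith
  calc ‖w‖ ^ 2 = 2 * L * (1 / (2 * L) * ‖w‖ ^ 2) := by field_simp
    _ ≤ 2 * L * (f x - f y - ⟪a, x - y⟫) := by
        exact mul_le_mul_of_nonneg_left this h2L.le

end Aux

/-- Bounding client aggregate gradients (per-step version): with differentiable, convex,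
`L`-smooth local objectives, global objective `Lg = (1/U) ∑ Lf u` with global minimizer
`Wstar`, heterogeneity bound `σ2` at the optimum, and `N` local GD steps with stepsize
`η > 0` from the common start `W`. -/
theorem client_aggregate_gradient_bound
    {E : Type*} [NormedAddCommGroup E] [InnerProductSpace ℝ E] [CompleteSpace E]
    (U : ℕ) (hU : 0 < U) (Lf : Fin U → E → ℝ) (L : ℝ) (hL : 0 < L)
    (hdiff : ∀ u, Differentiable ℝ (Lf u))
    (hconv : ∀ u, ConvexOn ℝ Set.univ (Lf u))
    (hsmooth : ∀ u, ∀ x y : E, ‖gradient (Lf u) x - gradient (Lf u) y‖ ≤ L * ‖x - y‖)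
    (Lg : E → ℝ) (hLg : ∀ x : E, Lg x = ((1 : ℝ) / U) * ∑ u, Lf u x)
    (Wstar : E) (hmin : ∀ x : E, Lg Wstar ≤ Lg x)
    (σ2 : ℝ) (hσ2 : 0 ≤ σ2)
    (hhet : ((1 : ℝ) / U) * ∑ u, ‖gradient (Lf u) Wstar‖ ^ 2 ≤ σ2)
    (η : ℝ) (hη0 : 0 < η)
    (N : ℕ) (hN : 1 ≤ N)
    (W : E) (Wseq : Fin U → ℕ → E)
    (hW0 : ∀ u, Wseq u 0 = W)
    (hstep : ∀ u e, Wseq u (e + 1) = Wseq u e - η • gradient (Lf u) (Wseq u e)) :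
    ((1 : ℝ) / U) * ∑ u, ∑ e ∈ Finset.range N, ‖gradient (Lf u) (Wseq u e)‖ ^ 2 ≤
      (3 * L ^ 2 / U) * ∑ u, ∑ e ∈ Finset.range N, ‖Wseq u e - W‖ ^ 2 +
        6 * N * L * (Lg W - Lg Wstar) + 3 * N * σ2 := by
  have hUR : (0:ℝ) < (U:ℝ) := by exact_mod_cast hU
  have hg : ∀ u z, HasGradientAt (Lf u) (gradient (Lf u) z) z :=
    fun u z => (hdiff u z).hasGradientAt
  set C : Fin U → ℝ := fun u =>
    Lf u W - Lf u Wstar - ⟪gradient (Lf u) Wstar, W - Wstar⟫ with hC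
  set D : Fin U → ℝ := fun u => ‖gradient (Lf u) Wstar‖ ^ 2 with hD
  -- key pointwise inequality
  have key : ∀ (u : Fin U) (z : E),
      ‖gradient (Lf u) z‖ ^ 2 ≤ 3 * L ^ 2 * ‖z - W‖ ^ 2 + (6 * L * C u + 3 * D u) := by
    intro u z
    have hco := aux_cocoercive (Lf u) (fun z => gradient (Lf u) z) (hg u) (hconv u)
      L hL (hsmooth u) W Wstar
    have hsm : ‖gradient (Lf u) z - gradient (Lf u) W‖ ^ 2 ≤ L ^ 2 * ‖z - W‖ ^ 2 := by
      have h1 := hsmooth u z W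
      nlinarith [norm_nonneg (gradient (Lf u) z - gradient (Lf u) W), norm_nonneg (z - W)]
    have htri : ‖gradient (Lf u) z‖ ^ 2 ≤
        3 * ‖gradient (Lf u) z - gradient (Lf u) W‖ ^ 2 +
        3 * ‖gradient (Lf u) W - gradient (Lf u) Wstar‖ ^ 2 +
        3 * ‖gradient (Lf u) Wstar‖ ^ 2 := by
      have he : gradient (Lf u) z =
          (gradient (Lf u) z - gradient (Lf u) W) +
          (gradient (Lf u) W - gradient (Lf u) Wstar) + gradient (Lf u) Wstar := by abel
      have hn : ‖gradient (Lf u) z‖ ≤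
          ‖gradient (Lf u) z - gradient (Lf u) W‖ +
          ‖gradient (Lf u) W - gradient (Lf u) Wstar‖ + ‖gradient (Lf u) Wstar‖ := by
        nth_rewrite 1 [he]
        exact norm_add₃_le
      have hsq := pow_le_pow_left₀ (norm_nonneg (gradient (Lf u) z)) hn 2
      nlinarith [hsq,
        sq_nonneg (‖gradient (Lf u) z - gradient (Lf u) W‖ -
          ‖gradient (Lf u) W - gradient (Lf u) Wstar‖),
        sq_nonneg (‖gradient (Lf u) z - gradient (Lf u) W‖ - ‖gradient (Lf u) Wstar‖),
        sq_nonneg (‖gradient (Lf u) W - gradient (Lf u) Wstar‖ - ‖gradient (Lf u) Wstar‖)]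
    simp only [hC, hD]
    linarith
  -- per-client summed inequality
  have sumE : ∀ u : Fin U,
      ∑ e ∈ Finset.range N, ‖gradient (Lf u) (Wseq u e)‖ ^ 2 ≤
        3 * L ^ 2 * ∑ e ∈ Finset.range N, ‖Wseq u e - W‖ ^ 2 +
        (N : ℝ) * (6 * L * C u + 3 * D u) := by
    intro u
    calc ∑ e ∈ Finset.range N, ‖gradient (Lf u) (Wseq u e)‖ ^ 2
        ≤ ∑ e ∈ Finset.range N,
            (3 * L ^ 2 * ‖Wseq u e - W‖ ^ 2 + (6 * L * C u + 3 * D u)) :=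
          Finset.sum_le_sum fun e _ => key u (Wseq u e)
      _ = 3 * L ^ 2 * ∑ e ∈ Finset.range N, ‖Wseq u e - W‖ ^ 2 +
            (N : ℝ) * (6 * L * C u + 3 * D u) := by
          rw [Finset.sum_add_distrib, ← Finset.mul_sum, Finset.sum_const,
            Finset.card_range, nsmul_eq_mul]
  set S1 : ℝ := ∑ u, ∑ e ∈ Finset.range N, ‖gradient (Lf u) (Wseq u e)‖ ^ 2 with hS1
  set S2 : ℝ := ∑ u, ∑ e ∈ Finset.range N, ‖Wseq u e - W‖ ^ 2 with hS2
  have h1 : S1 ≤ 3 * L ^ 2 * S2 + (N : ℝ) * (6 * L * ∑ u, C u + 3 * ∑ u, D u) := by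
    calc S1 ≤ ∑ u, (3 * L ^ 2 * ∑ e ∈ Finset.range N, ‖Wseq u e - W‖ ^ 2 +
          (N : ℝ) * (6 * L * C u + 3 * D u)) := Finset.sum_le_sum fun u _ => sumE u
      _ = 3 * L ^ 2 * S2 + (N : ℝ) * (6 * L * ∑ u, C u + 3 * ∑ u, D u) := by
          rw [Finset.sum_add_distrib, ← Finset.mul_sum, ← Finset.mul_sum, hS2,
            Finset.sum_add_distrib, ← Finset.mul_sum, ← Finset.mul_sum]
  -- sum of inner products at the optimum vanishes
  have hsum0 : ∑ u, ⟪gradient (Lf u) Wstar, W - Wstar⟫ = 0 := by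
    have hgsum : HasFDerivAt (fun x => ∑ u, Lf u x)
        (∑ u, InnerProductSpace.toDual ℝ E (gradient (Lf u) Wstar)) Wstar :=
      HasFDerivAt.fun_sum fun u _ => hasGradientAt_iff_hasFDerivAt.mp (hg u Wstar)
    have hLgF : HasFDerivAt Lg
        (((1:ℝ)/U) • ∑ u, InnerProductSpace.toDual ℝ E (gradient (Lf u) Wstar)) Wstar := by
      have hfun : Lg = fun x => ((1:ℝ)/U) * ∑ u, Lf u x := funext hLg
      rw [hfun]
      exact hgsum.const_mul _
    have hloc : IsLocalMin Lg Wstar := Filter.Eventually.of_forall hmin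
    have hzero := hloc.hasFDerivAt_eq_zero hLgF
    have happ := congrArg (fun (T : E →L[ℝ] ℝ) => T (W - Wstar)) hzero
    simp only [ContinuousLinearMap.smul_apply, ContinuousLinearMap.coe_sum',
      Finset.sum_apply, InnerProductSpace.toDual_apply_apply, ContinuousLinearMap.zero_apply,
      smul_eq_mul] at happ
    have hUne : (1:ℝ)/U ≠ 0 := by positivity
    exact (mul_eq_zero.mp happ).resolve_left hUne
  have h2 : ((1:ℝ)/U) * ∑ u, C u = Lg W - Lg Wstar := by
    simp only [hC]
    rw [Finset.sum_sub_distrib, Finset.sum_sub_distrib, hsum0, sub_zero,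
      hLg W, hLg Wstar]
    ring
  have h3 : ((1:ℝ)/U) * ∑ u, D u ≤ σ2 := hhet
  have hinvU : (0:ℝ) ≤ (1:ℝ)/U := by positivity
  calc ((1:ℝ)/U) * S1
      ≤ ((1:ℝ)/U) * (3 * L ^ 2 * S2 + (N : ℝ) * (6 * L * ∑ u, C u + 3 * ∑ u, D u)) :=
        mul_le_mul_of_nonneg_left h1 hinvU
    _ = (3 * L ^ 2 / U) * S2 + 6 * (N:ℝ) * L * (((1:ℝ)/U) * ∑ u, C u) +
          3 * (N:ℝ) * (((1:ℝ)/U) * ∑ u, D u) := by ring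
    _ = (3 * L ^ 2 / U) * S2 + 6 * (N:ℝ) * L * (Lg W - Lg Wstar) +
          3 * (N:ℝ) * (((1:ℝ)/U) * ∑ u, D u) := by rw [h2]
    _ ≤ (3 * L ^ 2 / U) * S2 + 6 * (N:ℝ) * L * (Lg W - Lg Wstar) + 3 * (N:ℝ) * σ2 := by
        have : (0:ℝ) ≤ 3 * (N:ℝ) := by positivity
        exact add_le_add_right (mul_le_mul_of_nonneg_left h3 this) _
end

section
/- Suppose each local objective L_u (u = 1, …, U) is differentiable, convex, and L-smooth; let L = (1/U)·∑_{u=1}^U L_u, let W* be a global minimizer of L, and let σ*² ≥ 0 satisfy (1/U)·∑_{u=1}^U ‖∇L_u(W*)‖² ≤ σ*². Let each client run E steps of local gradient descent with stepsize η > 0 from the common starting point W, and let h_u = ∑_{e=0}^{E−1} ∇L_u(W_u^(e)). Then (1/U)·∑_{u=1}^U ‖h_u‖² ≤ (3·E·L²/U)·∑_{u=1}^U ∑_{e=0}^{E−1} ‖W_u^(e) − W‖² + 6·E²·L·(L(W) − L(W*)) + 3·E²·σ*². -/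
open scoped RealInnerProductSpace BigOperators

section Helpers

variable {F : Type*} [NormedAddCommGroup F] [InnerProductSpace ℝ F] [CompleteSpace F]

lemma agg_hasDerivAt_line (f : F → ℝ) (hf : Differentiable ℝ f) (x v : F) (t : ℝ) :
    HasDerivAt (fun s : ℝ => f (x + s • v)) ⟪gradient f (x + t • v), v⟫ t := by
  have hc : HasDerivAt (fun s : ℝ => x + s • v) v t := by
    simpa using ((hasDerivAt_id t).smul_const v).const_add x
  have hg := ((hf (x + t • v)).hasGradientAt).hasFDerivAt
  have h2 := hg.comp_hasDerivAt t hc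
  simpa [InnerProductSpace.toDual_apply_apply, Function.comp_def] using h2

lemma agg_first_order (f : F → ℝ) (hf : Differentiable ℝ f) (hconv : ConvexOn ℝ Set.univ f)
    (x y : F) : f x + ⟪gradient f x, y - x⟫ ≤ f y := by
  set g : ℝ → ℝ := fun t => f (x + t • (y - x)) with hgdef
  have hgc : ConvexOn ℝ Set.univ g := by
    have h := hconv.comp_affineMap (AffineMap.lineMap x y)
    have he : g = f ∘ (AffineMap.lineMap x y) := by
      funext t
      simp [hgdef, AffineMap.lineMap_apply, add_comm]
    rw [he]
    simpa using h
  have hd : HasDerivAt g ⟪gradient f x, y - x⟫ 0 := by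
    have := agg_hasDerivAt_line f hf x (y - x) 0
    simpa using this
  have hs := hgc.le_slope_of_hasDerivAt (Set.mem_univ 0) (Set.mem_univ 1) one_pos hd
  rw [slope_def_field] at hs
  have h0 : g 0 = f x := by simp [hgdef]
  have h1 : g 1 = f y := by simp [hgdef]
  rw [h0, h1] at hs
  simp at hs
  have hi : ⟪gradient f x, y - x⟫ = (fderiv ℝ f x) y - (fderiv ℝ f x) x := by simp
  linarith

lemma agg_descent (f : F → ℝ) (hf : Differentiable ℝ f) (L : ℝ) (hL : 0 ≤ L)
    (hlip : ∀ a b : F, ‖gradient f a - gradient f b‖ ≤ L * ‖a - b‖) (x y : F) :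
    f y ≤ f x + ⟪gradient f x, y - x⟫ + L / 2 * ‖y - x‖ ^ 2 := by
  set v := y - x with hv
  set g' : ℝ → ℝ := fun t => ⟪gradient f (x + t • v), v⟫ with hg'
  have hderiv : ∀ t : ℝ, HasDerivAt (fun s : ℝ => f (x + s • v)) (g' t) t :=
    fun t => agg_hasDerivAt_line f hf x v t
  have hgc : Continuous (gradient f) := by
    refine (LipschitzWith.of_dist_le_mul (K := L.toNNReal) ?_).continuous
    intro a b
    rw [Real.coe_toNNReal L hL]
    simpa [dist_eq_norm] using hlip a b
  have hcont : Continuous g' :=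
    (hgc.comp (continuous_const.add (continuous_id.smul continuous_const))).inner
      continuous_const
  have hint : ∫ t in (0:ℝ)..1, g' t = f (x + (1:ℝ) • v) - f (x + (0:ℝ) • v) :=
    intervalIntegral.integral_eq_sub_of_hasDerivAt (fun t _ => hderiv t)
      (hcont.intervalIntegrable 0 1)
  have hcont2 : Continuous (fun t : ℝ => g' 0 + L * t * ‖v‖ ^ 2) := by continuity
  have hmono : ∫ t in (0:ℝ)..1, g' t ≤ ∫ t in (0:ℝ)..1, (g' 0 + L * t * ‖v‖ ^ 2) := by
    apply intervalIntegral.integral_mono_on (by norm_num) (hcont.intervalIntegrable 0 1)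
      (hcont2.intervalIntegrable 0 1)
    intro t ht
    have he : g' t - g' 0 = ⟪gradient f (x + t • v) - gradient f (x + (0:ℝ) • v), v⟫ := by
      simp [hg', inner_sub_left]
    have hb : g' t - g' 0 ≤ L * t * ‖v‖ ^ 2 := by
      rw [he]
      calc ⟪gradient f (x + t • v) - gradient f (x + (0:ℝ) • v), v⟫
          ≤ ‖gradient f (x + t • v) - gradient f (x + (0:ℝ) • v)‖ * ‖v‖ :=
            real_inner_le_norm _ _
        _ ≤ (L * ‖(x + t • v) - (x + (0:ℝ) • v)‖) * ‖v‖ :=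
            mul_le_mul_of_nonneg_right (hlip _ _) (norm_nonneg _)
        _ = L * t * ‖v‖ ^ 2 := by
            simp [norm_smul, abs_of_nonneg ht.1]
            ring
    linarith
  have hval : ∫ t in (0:ℝ)..1, (g' 0 + L * t * ‖v‖ ^ 2) = g' 0 + L / 2 * ‖v‖ ^ 2 := by
    have h1 : (fun t : ℝ => g' 0 + L * t * ‖v‖ ^ 2)
        = fun t : ℝ => g' 0 + (L * ‖v‖ ^ 2) * t := by funext t; ring
    rw [h1, intervalIntegral.integral_add intervalIntegrable_const
      (IntervalIntegrable.const_mul intervalIntegral.intervalIntegrable_id _),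
      intervalIntegral.integral_const_mul, integral_id]
    simp
    ring
  have h0 : g' 0 = ⟪gradient f x, y - x⟫ := by simp [hg', hv]
  have hxy : f (x + (1:ℝ) • v) = f y := by simp [hv]
  have hx0 : f (x + (0:ℝ) • v) = f x := by simp
  rw [hxy, hx0] at hint
  rw [hval, h0] at hmono
  rw [hint] at hmono
  linarith

lemma agg_cocoercive (f : F → ℝ) (hf : Differentiable ℝ f) (hconv : ConvexOn ℝ Set.univ f)
    (L : ℝ) (hL : 0 < L)
    (hlip : ∀ a b : F, ‖gradient f a - gradient f b‖ ≤ L * ‖a - b‖) (x y : F) :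
    ‖gradient f x - gradient f y‖ ^ 2 ≤ 2 * L * (f x - f y - ⟪gradient f y, x - y⟫) := by
  set c := gradient f y with hc
  set φ : F → ℝ := fun z => f z - ⟪c, z⟫ with hφ
  have hφgrad : ∀ z, HasGradientAt φ (gradient f z - c) z := by
    intro z
    have h1 := (hf z).hasGradientAt.hasFDerivAt
    have h2 : HasFDerivAt (fun w : F => ⟪c, w⟫) (InnerProductSpace.toDual ℝ F c) z :=
      (InnerProductSpace.toDual ℝ F c).hasFDerivAt
    have h3 := h1.sub h2
    rw [hasGradientAt_iff_hasFDerivAt, map_sub]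
    exact h3
  have hφdiff : Differentiable ℝ φ := fun z => (hφgrad z).differentiableAt
  have hφg : ∀ z, gradient φ z = gradient f z - c := fun z => (hφgrad z).gradient
  have hφlip : ∀ a b : F, ‖gradient φ a - gradient φ b‖ ≤ L * ‖a - b‖ := by
    intro a b
    rw [hφg, hφg, sub_sub_sub_cancel_right]
    exact hlip a b
  have hmin : ∀ z, φ y ≤ φ z := by
    intro z
    have := agg_first_order f hf hconv y z
    simp only [hφ]
    rw [inner_sub_right] at this
    linarith
  set g := gradient f x - c with hg
  set z0 : F := x - L⁻¹ • g with hz0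
  have hdes := agg_descent φ hφdiff L hL.le hφlip x z0
  rw [hφg x, ← hg] at hdes
  have hzx : z0 - x = -(L⁻¹ • g) := by rw [hz0]; abel
  have hin : ⟪g, z0 - x⟫ = -(L⁻¹ * ‖g‖ ^ 2) := by
    rw [hzx, inner_neg_right, real_inner_smul_right, real_inner_self_eq_norm_sq]
  have hnz : ‖z0 - x‖ ^ 2 = L⁻¹ ^ 2 * ‖g‖ ^ 2 := by
    rw [hzx, norm_neg, norm_smul, mul_pow, Real.norm_eq_abs, sq_abs]
  rw [hin, hnz] at hdes
  have hy0 := hmin z0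
  have hLi : L * L⁻¹ = 1 := mul_inv_cancel₀ hL.ne'
  have hexp : φ x - φ y = f x - f y - ⟪c, x - y⟫ := by
    simp only [hφ, inner_sub_right]
    ring
  have hsimp : L / 2 * (L⁻¹ ^ 2 * ‖g‖ ^ 2) = L⁻¹ / 2 * ‖g‖ ^ 2 := by
    field_simp
  rw [hsimp] at hdes
  clear_value z0 g φ c
  have hkey : L⁻¹ / 2 * ‖g‖ ^ 2 ≤ φ x - φ y := by nlinarith [hdes, hy0]
  have h2L : (0:ℝ) ≤ 2 * L := by linarith
  have hmul := mul_le_mul_of_nonneg_left hkey h2L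
  have hms : 2 * L * (L⁻¹ / 2 * ‖g‖ ^ 2) = ‖g‖ ^ 2 := by
    field_simp
  have : ‖g‖ ^ 2 ≤ 2 * L * (φ x - φ y) := by rw [hms] at hmul; exact hmul
  rw [hexp] at this
  exact this

end Helpers

/-- Bound on the averaged squared norm of the aggregate client gradients
`h_u = ∑_{e<N} ∇L_u(W_u^(e))`. -/
theorem aggregate_client_gradient_norm_bound
    {E : Type*} [NormedAddCommGroup E] [InnerProductSpace ℝ E] [CompleteSpace E]
    (U : ℕ) (hU : 0 < U) (Lf : Fin U → E → ℝ) (L : ℝ) (hL : 0 < L)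
    (hdiff : ∀ u, Differentiable ℝ (Lf u))
    (hconv : ∀ u, ConvexOn ℝ Set.univ (Lf u))
    (hsmooth : ∀ u, ∀ x y : E, ‖gradient (Lf u) x - gradient (Lf u) y‖ ≤ L * ‖x - y‖)
    (Lg : E → ℝ) (hLg : ∀ x : E, Lg x = ((1 : ℝ) / U) * ∑ u, Lf u x)
    (Wstar : E) (hmin : ∀ x : E, Lg Wstar ≤ Lg x)
    (σ2 : ℝ) (hσ2 : 0 ≤ σ2)
    (hhet : ((1 : ℝ) / U) * ∑ u, ‖gradient (Lf u) Wstar‖ ^ 2 ≤ σ2)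
    (η : ℝ) (hη0 : 0 < η)
    (N : ℕ) (hN : 1 ≤ N)
    (W : E) (Wseq : Fin U → ℕ → E)
    (hW0 : ∀ u, Wseq u 0 = W)
    (hstep : ∀ u e, Wseq u (e + 1) = Wseq u e - η • gradient (Lf u) (Wseq u e))
    (h : Fin U → E)
    (hh : ∀ u, h u = ∑ e ∈ Finset.range N, gradient (Lf u) (Wseq u e)) :
    ((1 : ℝ) / U) * ∑ u, ‖h u‖ ^ 2 ≤
      (3 * N * L ^ 2 / U) * ∑ u, ∑ e ∈ Finset.range N, ‖Wseq u e - W‖ ^ 2 +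
        6 * N ^ 2 * L * (Lg W - Lg Wstar) + 3 * N ^ 2 * σ2 := by
  have hU' : (0:ℝ) < U := Nat.cast_pos.mpr hU
  have hUne : (U:ℝ) ≠ 0 := hU'.ne'
  have hN' : (0:ℝ) ≤ N := Nat.cast_nonneg N
  -- sum of local gradients at the minimizer vanishes
  have hsum0 : ∑ u, gradient (Lf u) Wstar = 0 := by
    have hF : HasFDerivAt (fun x => ∑ u, Lf u x) (∑ u, fderiv ℝ (Lf u) Wstar) Wstar :=
      HasFDerivAt.fun_sum (fun u _ => (hdiff u Wstar).hasFDerivAt)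
    have hLgF : HasFDerivAt Lg (((1:ℝ)/U) • ∑ u, fderiv ℝ (Lf u) Wstar) Wstar := by
      have he : Lg = fun x => ((1:ℝ)/U) * ∑ u, Lf u x := funext hLg
      rw [he]
      exact hF.const_mul _
    have hloc : IsLocalMin Lg Wstar := Filter.Eventually.of_forall hmin
    have hzero := hloc.hasFDerivAt_eq_zero hLgF
    have h1 : ((1:ℝ)/U) ≠ 0 := one_div_ne_zero hUne
    have hz2 : ∑ u, fderiv ℝ (Lf u) Wstar = 0 := by
      have h2 : (U:ℝ) • (((1:ℝ)/U) • ∑ u, fderiv ℝ (Lf u) Wstar)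
          = (U:ℝ) • (0 : E →L[ℝ] ℝ) := by rw [hzero]
      rw [smul_smul, mul_one_div_cancel hUne, one_smul, smul_zero] at h2
      exact h2
    calc ∑ u, gradient (Lf u) Wstar
        = (InnerProductSpace.toDual ℝ E).symm (∑ u, fderiv ℝ (Lf u) Wstar) := by
          rw [map_sum]
          rfl
      _ = 0 := by rw [hz2, map_zero]
  -- sums of local values
  have hsW : ∑ u, Lf u W = U * Lg W := by
    have := hLg W
    field_simp at this
    linarith
  have hsWs : ∑ u, Lf u Wstar = U * Lg Wstar := by
    have := hLg Wstar
    field_simp at this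
    linarith
  -- cocoercivity sum
  have hB : ∑ u, ‖gradient (Lf u) W - gradient (Lf u) Wstar‖ ^ 2
      ≤ 2 * L * U * (Lg W - Lg Wstar) := by
    have h1 : ∀ u, ‖gradient (Lf u) W - gradient (Lf u) Wstar‖ ^ 2
        ≤ 2 * L * (Lf u W - Lf u Wstar - ⟪gradient (Lf u) Wstar, W - Wstar⟫) :=
      fun u => agg_cocoercive (Lf u) (hdiff u) (hconv u) L hL (hsmooth u) W Wstar
    calc ∑ u, ‖gradient (Lf u) W - gradient (Lf u) Wstar‖ ^ 2
        ≤ ∑ u, 2 * L * (Lf u W - Lf u Wstar - ⟪gradient (Lf u) Wstar, W - Wstar⟫) :=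
          Finset.sum_le_sum (fun u _ => h1 u)
      _ = 2 * L * (∑ u, Lf u W - ∑ u, Lf u Wstar
            - ⟪∑ u, gradient (Lf u) Wstar, W - Wstar⟫) := by
          rw [← Finset.mul_sum]
          congr 1
          rw [Finset.sum_sub_distrib, Finset.sum_sub_distrib, sum_inner]
      _ = 2 * L * U * (Lg W - Lg Wstar) := by
          rw [hsum0, inner_zero_left, hsW, hsWs]
          ring
  -- heterogeneity sum
  have hC : ∑ u, ‖gradient (Lf u) Wstar‖ ^ 2 ≤ U * σ2 := by
    have h2 := mul_le_mul_of_nonneg_left hhet hU'.le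
    calc ∑ u, ‖gradient (Lf u) Wstar‖ ^ 2
        = (U:ℝ) * (((1:ℝ)/U) * ∑ u, ‖gradient (Lf u) Wstar‖ ^ 2) := by
          field_simp
      _ ≤ (U:ℝ) * σ2 := h2
  -- per-client bound
  have hperu : ∀ u, ‖h u‖ ^ 2 ≤
      3 * N * L ^ 2 * ∑ e ∈ Finset.range N, ‖Wseq u e - W‖ ^ 2
      + 3 * (N:ℝ) ^ 2 * ‖gradient (Lf u) W - gradient (Lf u) Wstar‖ ^ 2
      + 3 * (N:ℝ) ^ 2 * ‖gradient (Lf u) Wstar‖ ^ 2 := by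
    intro u
    have h1 : ‖h u‖ ≤ ∑ e ∈ Finset.range N, ‖gradient (Lf u) (Wseq u e)‖ := by
      rw [hh u]
      exact norm_sum_le _ _
    have h2 : ‖h u‖ ^ 2 ≤ (N:ℝ) * ∑ e ∈ Finset.range N, ‖gradient (Lf u) (Wseq u e)‖ ^ 2 := by
      calc ‖h u‖ ^ 2 ≤ (∑ e ∈ Finset.range N, ‖gradient (Lf u) (Wseq u e)‖) ^ 2 :=
            pow_le_pow_left₀ (norm_nonneg _) h1 2
        _ ≤ (N:ℝ) * ∑ e ∈ Finset.range N, ‖gradient (Lf u) (Wseq u e)‖ ^ 2 := by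
            have := sq_sum_le_card_mul_sum_sq (s := Finset.range N)
              (f := fun e => ‖gradient (Lf u) (Wseq u e)‖)
            simpa using this
    have h3 : ∀ e ∈ Finset.range N, ‖gradient (Lf u) (Wseq u e)‖ ^ 2 ≤
        3 * L ^ 2 * ‖Wseq u e - W‖ ^ 2
          + 3 * ‖gradient (Lf u) W - gradient (Lf u) Wstar‖ ^ 2
          + 3 * ‖gradient (Lf u) Wstar‖ ^ 2 := by
      intro e _
      set p := Wseq u e
      set d1 := gradient (Lf u) p - gradient (Lf u) W with hd1def
      set d2 := gradient (Lf u) W - gradient (Lf u) Wstar with hd2def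
      set d3 := gradient (Lf u) Wstar with hd3def
      have hdecomp : gradient (Lf u) p = d1 + d2 + d3 := by
        rw [hd1def, hd2def, hd3def]; abel
      have hn : ‖gradient (Lf u) p‖ ≤ ‖d1‖ + ‖d2‖ + ‖d3‖ := by
        rw [hdecomp]
        exact (norm_add_le _ _).trans (add_le_add (norm_add_le _ _) le_rfl)
      have hsq : ‖gradient (Lf u) p‖ ^ 2 ≤ (‖d1‖ + ‖d2‖ + ‖d3‖) ^ 2 :=
        pow_le_pow_left₀ (norm_nonneg _) hn 2
      have hd1 : ‖d1‖ ≤ L * ‖p - W‖ := hsmooth u p W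
      have hd1sq : ‖d1‖ ^ 2 ≤ L ^ 2 * ‖p - W‖ ^ 2 := by
        have := pow_le_pow_left₀ (norm_nonneg d1) hd1 2
        calc ‖d1‖ ^ 2 ≤ (L * ‖p - W‖) ^ 2 := this
          _ = L ^ 2 * ‖p - W‖ ^ 2 := by ring
      nlinarith [hsq, hd1sq, sq_nonneg (‖d1‖ - ‖d2‖), sq_nonneg (‖d2‖ - ‖d3‖),
        sq_nonneg (‖d1‖ - ‖d3‖)]
    have h4 : ∑ e ∈ Finset.range N, ‖gradient (Lf u) (Wseq u e)‖ ^ 2 ≤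
        3 * L ^ 2 * ∑ e ∈ Finset.range N, ‖Wseq u e - W‖ ^ 2
        + 3 * (N:ℝ) * ‖gradient (Lf u) W - gradient (Lf u) Wstar‖ ^ 2
        + 3 * (N:ℝ) * ‖gradient (Lf u) Wstar‖ ^ 2 := by
      calc ∑ e ∈ Finset.range N, ‖gradient (Lf u) (Wseq u e)‖ ^ 2
          ≤ ∑ e ∈ Finset.range N, (3 * L ^ 2 * ‖Wseq u e - W‖ ^ 2
            + 3 * ‖gradient (Lf u) W - gradient (Lf u) Wstar‖ ^ 2
            + 3 * ‖gradient (Lf u) Wstar‖ ^ 2) := Finset.sum_le_sum h3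
        _ = 3 * L ^ 2 * ∑ e ∈ Finset.range N, ‖Wseq u e - W‖ ^ 2
            + 3 * (N:ℝ) * ‖gradient (Lf u) W - gradient (Lf u) Wstar‖ ^ 2
            + 3 * (N:ℝ) * ‖gradient (Lf u) Wstar‖ ^ 2 := by
          rw [Finset.sum_add_distrib, Finset.sum_add_distrib, Finset.sum_const,
            Finset.sum_const, Finset.card_range, ← Finset.mul_sum, nsmul_eq_mul,
            nsmul_eq_mul]
          ring
    calc ‖h u‖ ^ 2 ≤ (N:ℝ) * (3 * L ^ 2 * ∑ e ∈ Finset.range N, ‖Wseq u e - W‖ ^ 2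
          + 3 * (N:ℝ) * ‖gradient (Lf u) W - gradient (Lf u) Wstar‖ ^ 2
          + 3 * (N:ℝ) * ‖gradient (Lf u) Wstar‖ ^ 2) :=
        le_trans h2 (mul_le_mul_of_nonneg_left h4 hN')
      _ = 3 * N * L ^ 2 * ∑ e ∈ Finset.range N, ‖Wseq u e - W‖ ^ 2
          + 3 * (N:ℝ) ^ 2 * ‖gradient (Lf u) W - gradient (Lf u) Wstar‖ ^ 2
          + 3 * (N:ℝ) ^ 2 * ‖gradient (Lf u) Wstar‖ ^ 2 := by ring
  -- sum over clients
  have h3N : (0:ℝ) ≤ 3 * (N:ℝ) ^ 2 := by positivity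
  have hsumall : ∑ u, ‖h u‖ ^ 2 ≤
      3 * N * L ^ 2 * ∑ u, ∑ e ∈ Finset.range N, ‖Wseq u e - W‖ ^ 2
      + 3 * (N:ℝ) ^ 2 * (2 * L * U * (Lg W - Lg Wstar))
      + 3 * (N:ℝ) ^ 2 * (U * σ2) := by
    calc ∑ u, ‖h u‖ ^ 2
        ≤ ∑ u, (3 * N * L ^ 2 * ∑ e ∈ Finset.range N, ‖Wseq u e - W‖ ^ 2
          + 3 * (N:ℝ) ^ 2 * ‖gradient (Lf u) W - gradient (Lf u) Wstar‖ ^ 2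
          + 3 * (N:ℝ) ^ 2 * ‖gradient (Lf u) Wstar‖ ^ 2) :=
          Finset.sum_le_sum (fun u _ => hperu u)
      _ = 3 * N * L ^ 2 * ∑ u, ∑ e ∈ Finset.range N, ‖Wseq u e - W‖ ^ 2
          + 3 * (N:ℝ) ^ 2 * ∑ u, ‖gradient (Lf u) W - gradient (Lf u) Wstar‖ ^ 2
          + 3 * (N:ℝ) ^ 2 * ∑ u, ‖gradient (Lf u) Wstar‖ ^ 2 := by
          rw [Finset.sum_add_distrib, Finset.sum_add_distrib, ← Finset.mul_sum,
            ← Finset.mul_sum, ← Finset.mul_sum]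
      _ ≤ 3 * N * L ^ 2 * ∑ u, ∑ e ∈ Finset.range N, ‖Wseq u e - W‖ ^ 2
          + 3 * (N:ℝ) ^ 2 * (2 * L * U * (Lg W - Lg Wstar))
          + 3 * (N:ℝ) ^ 2 * (U * σ2) :=
          add_le_add (add_le_add le_rfl (mul_le_mul_of_nonneg_left hB h3N))
            (mul_le_mul_of_nonneg_left hC h3N)
  calc ((1:ℝ)/U) * ∑ u, ‖h u‖ ^ 2
      ≤ ((1:ℝ)/U) * (3 * N * L ^ 2 * ∑ u, ∑ e ∈ Finset.range N, ‖Wseq u e - W‖ ^ 2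
        + 3 * (N:ℝ) ^ 2 * (2 * L * U * (Lg W - Lg Wstar))
        + 3 * (N:ℝ) ^ 2 * (U * σ2)) :=
        mul_le_mul_of_nonneg_left hsumall (by positivity)
    _ = (3 * N * L ^ 2 / U) * ∑ u, ∑ e ∈ Finset.range N, ‖Wseq u e - W‖ ^ 2 +
        6 * N ^ 2 * L * (Lg W - Lg Wstar) + 3 * N ^ 2 * σ2 := by
        field_simp
        ring
end

section
/- Suppose each local objective L_u (u = 1, …, U) is differentiable, convex, and L-smooth, and let L = (1/U)·∑_{u=1}^U L_u. Let each client run E steps of local gradient descent with stepsize η > 0 from the common starting point W. Then for every point W* in E: (1/U)·∑_{u=1}^U ∑_{e=0}^{E−1} ⟨W − W*, ∇L_u(W_u^(e))⟩ ≥ E·(L(W) − L(W*)) − (L/(2U))·∑_{u=1}^U ∑_{e=0}^{E−1} ‖W − W_u^(e)‖². -/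
open scoped RealInnerProductSpace BigOperators

section Helpers

variable {E : Type*} [NormedAddCommGroup E] [InnerProductSpace ℝ E] [CompleteSpace E]

lemma line_hasDerivAt (f : E → ℝ) (hf : Differentiable ℝ f) (x v : E) (t : ℝ) :
    HasDerivAt (fun s : ℝ => f (x + s • v)) ⟪gradient f (x + t • v), v⟫ t := by
  have h1 : HasDerivAt (fun s : ℝ => x + s • v) v t := by
    simpa using (((hasDerivAt_id t).smul_const v).const_add x)
  have h2 : HasFDerivAt f ((InnerProductSpace.toDual ℝ E) (gradient f (x + t • v))) (x + t • v) := by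
    exact (hasGradientAt_iff_hasFDerivAt).1 ((hf (x + t • v)).hasGradientAt)
  exact h2.comp_hasDerivAt t h1

lemma convex_grad_ineq (f : E → ℝ) (hf : Differentiable ℝ f)
    (hc : ConvexOn ℝ Set.univ f) (x y : E) :
    f x + ⟪gradient f x, y - x⟫ ≤ f y := by
  set v := y - x with hv
  have hg : ConvexOn ℝ Set.univ (fun s : ℝ => f (x + s • v)) := by
    have := hc.comp_affineMap (AffineMap.const ℝ ℝ x + LinearMap.toAffineMap (LinearMap.smulRight (LinearMap.id : ℝ →ₗ[ℝ] ℝ) v))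
    simpa [Set.preimage_univ, Function.comp_def] using this
  have hd : HasDerivAt (fun s : ℝ => f (x + s • v)) ⟪gradient f x, v⟫ 0 := by
    simpa using line_hasDerivAt f hf x v 0
  have := hg.le_slope_of_hasDerivAt (Set.mem_univ (0:ℝ)) (Set.mem_univ (1:ℝ)) one_pos hd
  simp [slope_def_field, hv] at this
  have hgv : ⟪gradient f x, v⟫ = (fderiv ℝ f x) y - (fderiv ℝ f x) x := by simp [hv]
  linarith

lemma descent_lemma (f : E → ℝ) (hf : Differentiable ℝ f) (L : ℝ) (hL : 0 < L)
    (hs : ∀ x y : E, ‖gradient f x - gradient f y‖ ≤ L * ‖x - y‖) (x y : E) :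
    f y ≤ f x + ⟪gradient f x, y - x⟫ + L / 2 * ‖y - x‖ ^ 2 := by
  set v := y - x with hv
  set φ : ℝ → ℝ := fun t => f (x + t • v) - t * ⟪gradient f x, v⟫ - L * t ^ 2 * ‖v‖ ^ 2 / 2
    with hφ
  have hder : ∀ t : ℝ, HasDerivAt φ
      (⟪gradient f (x + t • v), v⟫ - ⟪gradient f x, v⟫ - L * t * ‖v‖ ^ 2) t := by
    intro t
    have h1 := line_hasDerivAt f hf x v t
    have h2 : HasDerivAt (fun t : ℝ => t * ⟪gradient f x, v⟫) ⟪gradient f x, v⟫ t := by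
      simpa using (hasDerivAt_id t).mul_const ⟪gradient f x, v⟫
    have h3 : HasDerivAt (fun t : ℝ => L * t ^ 2 * ‖v‖ ^ 2 / 2) (L * t * ‖v‖ ^ 2) t := by
      have : HasDerivAt (fun t : ℝ => t ^ 2) (2 * t) t := by
        simpa using hasDerivAt_pow 2 t
      have := ((this.const_mul L).mul_const (‖v‖ ^ 2)).div_const 2
      rw [show L * t * ‖v‖ ^ 2 = L * (2 * t) * ‖v‖ ^ 2 / 2 by ring]
      exact this
    exact (h1.sub h2).sub h3
  have hanti : AntitoneOn φ (Set.Icc 0 1) := by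
    apply antitoneOn_of_deriv_nonpos (convex_Icc 0 1)
    · exact fun t _ => ((hder t).differentiableAt.continuousAt).continuousWithinAt
    · exact fun t _ => (hder t).differentiableAt.differentiableWithinAt
    · intro t ht
      rw [interior_Icc] at ht
      rw [(hder t).deriv]
      have hb : ⟪gradient f (x + t • v) - gradient f x, v⟫ ≤ L * t * ‖v‖ ^ 2 := by
        calc ⟪gradient f (x + t • v) - gradient f x, v⟫
            ≤ ‖gradient f (x + t • v) - gradient f x‖ * ‖v‖ := real_inner_le_norm _ _
          _ ≤ (L * ‖(x + t • v) - x‖) * ‖v‖ := by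
              exact mul_le_mul_of_nonneg_right (hs _ _) (norm_nonneg _)
          _ = L * t * ‖v‖ ^ 2 := by
              have : ‖(x + t • v) - x‖ = |t| * ‖v‖ := by
                simp [norm_smul, Real.norm_eq_abs]
              rw [this, abs_of_pos ht.1]; ring
      rw [inner_sub_left] at hb
      linarith
  have := hanti (Set.left_mem_Icc.2 zero_le_one) (Set.right_mem_Icc.2 zero_le_one) zero_le_one
  simp [hφ] at this
  have hxy : x + v = y := by simp [hv]
  rw [hxy] at this
  have hgv : ⟪gradient f x, v⟫ = (fderiv ℝ f x) v := by simp
  linarith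

end Helpers

/-- Lower bound on the averaged inner products between `W − W*` and the local gradients
along the local GD trajectories, in terms of the global suboptimality and the client drift. -/
theorem avg_inner_product_lower_bound
    {E : Type*} [NormedAddCommGroup E] [InnerProductSpace ℝ E] [CompleteSpace E]
    (U : ℕ) (hU : 0 < U) (Lf : Fin U → E → ℝ) (L : ℝ) (hL : 0 < L)
    (hdiff : ∀ u, Differentiable ℝ (Lf u))
    (hconv : ∀ u, ConvexOn ℝ Set.univ (Lf u))
    (hsmooth : ∀ u, ∀ x y : E, ‖gradient (Lf u) x - gradient (Lf u) y‖ ≤ L * ‖x - y‖)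
    (Lg : E → ℝ) (hLg : ∀ x : E, Lg x = ((1 : ℝ) / U) * ∑ u, Lf u x)
    (η : ℝ) (hη0 : 0 < η)
    (N : ℕ) (hN : 1 ≤ N)
    (W : E) (Wseq : Fin U → ℕ → E)
    (hW0 : ∀ u, Wseq u 0 = W)
    (hstep : ∀ u e, Wseq u (e + 1) = Wseq u e - η • gradient (Lf u) (Wseq u e)) :
    ∀ Wstar : E,
      (N : ℝ) * (Lg W - Lg Wstar) -
          (L / (2 * U)) * ∑ u, ∑ e ∈ Finset.range N, ‖W - Wseq u e‖ ^ 2 ≤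
        ((1 : ℝ) / U) *
          ∑ u, ∑ e ∈ Finset.range N, ⟪W - Wstar, gradient (Lf u) (Wseq u e)⟫ := by
  intro Wstar
  have key : ∀ u, ∀ e ∈ Finset.range N,
      Lf u W - Lf u Wstar - L / 2 * ‖W - Wseq u e‖ ^ 2 ≤
        ⟪W - Wstar, gradient (Lf u) (Wseq u e)⟫ := by
    intro u e _
    set x := Wseq u e
    have h1 : Lf u x + ⟪gradient (Lf u) x, Wstar - x⟫ ≤ Lf u Wstar :=
      convex_grad_ineq (Lf u) (hdiff u) (hconv u) x Wstar
    have h2 : Lf u W ≤ Lf u x + ⟪gradient (Lf u) x, W - x⟫ + L / 2 * ‖W - x‖ ^ 2 :=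
      descent_lemma (Lf u) (hdiff u) L hL (hsmooth u) x W
    have hsplit : ⟪W - Wstar, gradient (Lf u) x⟫
        = ⟪gradient (Lf u) x, W - x⟫ - ⟪gradient (Lf u) x, Wstar - x⟫ := by
      rw [real_inner_comm]
      rw [← inner_sub_right]
      congr 1
      abel
    rw [hsplit]
    linarith
  have keysum : ∀ u : Fin U,
      (N : ℝ) * (Lf u W - Lf u Wstar) - L / 2 * ∑ e ∈ Finset.range N, ‖W - Wseq u e‖ ^ 2 ≤
        ∑ e ∈ Finset.range N, ⟪W - Wstar, gradient (Lf u) (Wseq u e)⟫ := by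
    intro u
    have := Finset.sum_le_sum (key u)
    calc (N : ℝ) * (Lf u W - Lf u Wstar) - L / 2 * ∑ e ∈ Finset.range N, ‖W - Wseq u e‖ ^ 2
        = ∑ e ∈ Finset.range N, (Lf u W - Lf u Wstar - L / 2 * ‖W - Wseq u e‖ ^ 2) := by
          rw [Finset.sum_sub_distrib, Finset.sum_const, Finset.card_range, ← Finset.mul_sum]
          push_cast; ring
      _ ≤ _ := this
  have hsum := Finset.sum_le_sum (s := (Finset.univ : Finset (Fin U))) (fun u _ => keysum u)
  have hUne : (U : ℝ) ≠ 0 := Nat.cast_ne_zero.2 hU.ne'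
  have hfinal := mul_le_mul_of_nonneg_left hsum
    (by positivity : (0:ℝ) ≤ (1:ℝ)/U)
  refine le_trans (le_of_eq ?_) hfinal
  have e1 : ∑ u : Fin U, (N : ℝ) * (Lf u W - Lf u Wstar)
      = (N : ℝ) * ((∑ u, Lf u W) - ∑ u, Lf u Wstar) := by
    rw [← Finset.sum_sub_distrib, Finset.mul_sum]
  have e2 : ∑ u : Fin U, L / 2 * ∑ e ∈ Finset.range N, ‖W - Wseq u e‖ ^ 2
      = L / 2 * ∑ u, ∑ e ∈ Finset.range N, ‖W - Wseq u e‖ ^ 2 := (Finset.mul_sum _ _ _).symm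
  rw [Finset.sum_sub_distrib, e1, e2, hLg, hLg]
  ring
end
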